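/- Let L be a finite-dimensional Lie algebra over ℂ carrying a nondegenerate symmetric invariant bilinear form B (invariance: B(⁅a,b⁆,c) = B(a,⁅b,c⁆) for all a,b,c ∈ L). Let x ∈ L be such that ad x is diagonalizable with all eigenvalues in ½ℤ; for j ∈ ½ℤ let g_j denote the eigenspace of ad x with eigenvalue j, so that L = ⊕_{j ∈ ½ℤ} g_j. Let f ∈ g_{−1} and suppose (x,f) is a good pair, i.e. the centralizer L^f = {a ∈ L : ⁅f,a⁆ = 0} is contained in ⊕_{j ≤ 0} g_j. Then dim L^f = dim g₀ + dim g_{1/2}. -/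

import Mathlib

open Module LinearMap

private lemma disjoint_biSup_of_disjoint {ι R M : Type*} [Ring R] [AddCommGroup M] [Module R M]
    {p : ι → Submodule R M} (hp : iSupIndep p) {s t : Set ι} (hst : Disjoint s t) :
    Disjoint (⨆ i ∈ s, p i) (⨆ i ∈ t, p i) := by
  classical
  have key : ∀ u : Finset ι, (↑u : Set ι) ⊆ t →
      Disjoint (⨆ i ∈ s, p i) (⨆ i ∈ (↑u : Set ι), p i) := by
    intro u
    induction u using Finset.induction_on with
    | empty => simp
    | @insert j u hj ih =>
      intro hsub
      have hjt : j ∈ t := hsub (Finset.mem_coe.mpr (Finset.mem_insert_self j u))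
      have hut : (↑u : Set ι) ⊆ t := fun i hi => hsub (by simp [hi])
      have hj' : j ∉ s ∪ (↑u : Set ι) := by
        rintro (h | h)
        · exact Set.disjoint_left.mp hst h hjt
        · exact hj (Finset.mem_coe.mp h)
      have h1 : Disjoint ((⨆ i ∈ s, p i) ⊔ ⨆ i ∈ (↑u : Set ι), p i) (p j) := by
        refine ((hp.disjoint_biSup hj').mono_right ?_).symm
        rw [iSup_union]
      have h2 := (ih hut).disjoint_sup_right_of_disjoint_sup_left h1
      refine h2.mono_right ?_
      rw [Finset.coe_insert, Set.insert_eq, iSup_union, iSup_singleton, sup_comm]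
  rw [disjoint_iff_inf_le]
  intro z hz
  obtain ⟨hzs, hzt⟩ := Submodule.mem_inf.mp hz
  have hzt' : z ∈ ⨆ i : t, p ↑i := by rwa [iSup_subtype'] at hzt
  obtain ⟨v, hv⟩ := Submodule.exists_finset_of_mem_iSup _ hzt'
  have hsub : (↑(v.image Subtype.val) : Set ι) ⊆ t := by
    intro a ha
    simp only [Finset.coe_image, Set.mem_image, Finset.mem_coe] at ha
    obtain ⟨b, _, rfl⟩ := ha
    exact b.2
  have hle : (⨆ i ∈ v, p ↑i) ≤ ⨆ i ∈ (↑(v.image Subtype.val) : Set ι), p i := by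
    refine iSup₂_le fun i hi => ?_
    exact le_iSup₂_of_le (↑i) (Finset.mem_coe.mpr (Finset.mem_image_of_mem _ hi)) le_rfl
  exact (Submodule.disjoint_def.mp (key _ hsub)) z hzs (hle hv)

theorem good_pair_centralizer_dim
    {L : Type*} [LieRing L] [LieAlgebra ℂ L] [FiniteDimensional ℂ L]
    (B : L →ₗ[ℂ] L →ₗ[ℂ] ℂ)
    (hsymm : ∀ a b, B a b = B b a)
    (hinv : ∀ a b c, B ⁅a, b⁆ c = B a ⁅b, c⁆)
    (hnd : ∀ a, (∀ b, B a b = 0) → a = 0)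
    (x : L) (g : ℤ → Submodule ℂ L)
    (hg : ∀ k : ℤ, g k = Module.End.eigenspace (LieAlgebra.ad ℂ L x) ((k : ℂ) / 2))
    (hdiag : (⨆ k : ℤ, g k) = ⊤)
    (f : L) (hf : f ∈ g (-2))
    (hgood : ∀ a : L, ⁅f, a⁆ = 0 → a ∈ ⨆ k ≤ (0 : ℤ), g k) :
    Module.finrank ℂ (LinearMap.ker (LieAlgebra.ad ℂ L f)) =
      Module.finrank ℂ (g 0) + Module.finrank ℂ (g 1) := by
  classical
  set F := LieAlgebra.ad ℂ L f with hF
  -- basic facts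
  have hginj : Function.Injective (fun k : ℤ => ((k : ℂ) / 2)) := by
    intro a b h
    simp only at h
    field_simp at h
    exact_mod_cast h
  have hindep : iSupIndep g := by
    have hgeq : g = (Module.End.eigenspace (LieAlgebra.ad ℂ L x)) ∘ (fun k : ℤ => ((k : ℂ) / 2)) :=
      funext hg
    rw [hgeq]
    exact (Module.End.eigenspaces_iSupIndep (LieAlgebra.ad ℂ L x)).comp hginj
  have hdisjG : ∀ {s t : Set ℤ}, Disjoint s t →
      Disjoint (⨆ k ∈ s, g k) (⨆ k ∈ t, g k) :=
    fun h => disjoint_biSup_of_disjoint hindep h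
  have hranksup : ∀ (A C : Submodule ℂ L), Disjoint A C →
      finrank ℂ ↥(A ⊔ C) = finrank ℂ A + finrank ℂ C := by
    intro A C h
    have := Submodule.finrank_sup_add_finrank_inf_eq A C
    rw [h.eq_bot] at this
    simpa using this
  have hrank : ∀ {s t : Set ℤ}, Disjoint s t →
      finrank ℂ ↥(⨆ k ∈ s ∪ t, g k) = finrank ℂ ↥(⨆ k ∈ s, g k) + finrank ℂ ↥(⨆ k ∈ t, g k) := by
    intro s t h
    rw [iSup_union]
    exact hranksup _ _ (hdisjG h)
  -- eigenvector equations
  have hlie : ∀ {k : ℤ} {a : L}, a ∈ g k → ⁅x, a⁆ = (((k : ℂ)) / 2) • a := by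
    intro k a ha
    rw [hg] at ha
    simpa [LieAlgebra.ad_apply] using Module.End.mem_eigenspace_iff.mp ha
  have hmemg : ∀ {k : ℤ} {a : L}, ⁅x, a⁆ = (((k : ℂ)) / 2) • a → a ∈ g k := by
    intro k a ha
    rw [hg]
    rw [Module.End.mem_eigenspace_iff, LieAlgebra.ad_apply]
    exact ha
  -- single orthogonality
  have hbil2 : ∀ (i j : ℤ), i + j ≠ 0 → ∀ a ∈ g i, ∀ b ∈ g j, B a b = 0 := by
    intro i j hij a ha b hb
    have e2 : ⁅a, x⁆ = -⁅x, a⁆ := by rw [← lie_skew]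
    have h1 : B a ⁅x, b⁆ = -(B ⁅x, a⁆ b) := by
      rw [← hinv a x b, e2, map_neg, LinearMap.neg_apply]
    rw [hlie ha, hlie hb] at h1
    simp only [map_smul, LinearMap.smul_apply, smul_eq_mul] at h1
    have h2 : (((i : ℂ) + j) / 2) * B a b = 0 := by linear_combination h1
    have h3 : ((i : ℂ) + j) / 2 ≠ 0 := by
      have : ((i : ℂ) + j) ≠ 0 := by
        exact_mod_cast fun hc => hij (by exact_mod_cast hc)
      simpa using this
    exact (mul_eq_zero.mp h2).resolve_left h3
  -- set-level orthogonality
  have horth : ∀ (s t : Set ℤ), (∀ i ∈ s, ∀ j ∈ t, i + j ≠ 0) →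
      ∀ a ∈ (⨆ k ∈ s, g k), ∀ b ∈ (⨆ k ∈ t, g k), B a b = 0 := by
    intro s t h a ha b hb
    have step1 : ∀ i ∈ s, ∀ a' ∈ g i, ∀ b' ∈ (⨆ k ∈ t, g k), B a' b' = 0 := by
      intro i hi a' ha' b' hb'
      have : (⨆ k ∈ t, g k) ≤ LinearMap.ker (B a') :=
        iSup₂_le fun j hj => fun c hc => LinearMap.mem_ker.mpr (hbil2 i j (h i hi j hj) a' ha' c hc)
      exact this hb'
    have : (⨆ k ∈ s, g k) ≤ LinearMap.ker (B.flip b) :=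
      iSup₂_le fun i hi => fun c hc => LinearMap.mem_ker.mpr (step1 i hi c hc b hb)
    exact this ha
  -- duality of dimensions
  have hzero : ∀ a : L, (∀ k : ℤ, ∀ b ∈ g k, B a b = 0) → a = 0 := by
    intro a h
    refine hnd a fun b => ?_
    have : (⊤ : Submodule ℂ L) ≤ LinearMap.ker (B a) := by
      rw [← hdiag]
      exact iSup_le fun k => fun c hc => LinearMap.mem_ker.mpr (h k c hc)
    exact this (Submodule.mem_top)
  have hdualle : ∀ i j : ℤ, i + j = 0 → finrank ℂ (g i) ≤ finrank ℂ (g j) := by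
    intro i j hij
    have hinj : Function.Injective (B.domRestrict₁₂ (g i) (g j)) := by
      rw [injective_iff_map_eq_zero]
      intro a ha
      have h0 : (a : L) = 0 := by
        refine hzero a fun k b hb => ?_
        by_cases hk : k = j
        · subst hk
          have := congrArg (fun φ => φ ⟨b, hb⟩) ha
          simpa [LinearMap.domRestrict₁₂_apply] using this
        · exact hbil2 i k (fun hc => hk (by omega)) a a.2 b hb
      exact Subtype.ext h0
    calc finrank ℂ (g i) ≤ finrank ℂ (Module.Dual ℂ (g j)) :=
          LinearMap.finrank_le_finrank_of_injective hinj
      _ = finrank ℂ (g j) := Subspace.dual_finrank_eq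
  have hdual : finrank ℂ (g (-1)) = finrank ℂ (g 1) :=
    le_antisymm (hdualle (-1) 1 (by ring)) (hdualle 1 (-1) (by ring))
  -- degree shift
  have hshift : ∀ {k : ℤ} {a : L}, a ∈ g k → ⁅f, a⁆ ∈ g (k - 2) := by
    intro k a ha
    refine hmemg ?_
    have hxf : ⁅x, f⁆ = (((-2 : ℤ) : ℂ) / 2) • f := hlie hf
    have : ⁅x, ⁅f, a⁆⁆ = ⁅⁅x, f⁆, a⁆ + ⁅f, ⁅x, a⁆⁆ := leibniz_lie x f a
    rw [hxf, hlie ha] at this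
    rw [this]
    rw [smul_lie, lie_smul, ← add_smul]
    congr 1
    push_cast
    ring
  -- index sets
  have hdPQ : Disjoint {k : ℤ | 1 ≤ k} {k : ℤ | k ≤ 0} := by
    rw [Set.disjoint_left]; intro k hk hk'; simp only [Set.mem_setOf_eq] at hk hk'; omega
  have hd0m1 : Disjoint ({0} : Set ℤ) {k : ℤ | k ≤ -1} := by
    rw [Set.disjoint_left]; intro k hk hk'; simp only [Set.mem_singleton_iff] at hk
    simp only [Set.mem_setOf_eq] at hk'; omega
  have hdm1m2 : Disjoint ({-1} : Set ℤ) {k : ℤ | k ≤ -2} := by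
    rw [Set.disjoint_left]; intro k hk hk'; simp only [Set.mem_singleton_iff] at hk
    simp only [Set.mem_setOf_eq] at hk'; omega
  have hdTM : Disjoint {k : ℤ | k ≤ -2} {k : ℤ | -1 ≤ k} := by
    rw [Set.disjoint_left]; intro k hk hk'; simp only [Set.mem_setOf_eq] at hk hk'; omega
  -- the kernel is contained in the nonpositive part
  have hker_leQ : (LinearMap.ker F : Submodule ℂ L) ≤ ⨆ k ∈ {k : ℤ | k ≤ 0}, g k := by
    intro a ha
    have h1 : ⁅f, a⁆ = 0 := by simpa [F, LieAlgebra.ad_apply] using ha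
    exact hgood a h1
  -- map lemma
  have hmapG : ∀ (s t : Set ℤ), (∀ k ∈ s, k - 2 ∈ t) →
      Submodule.map F (⨆ k ∈ s, g k) ≤ ⨆ k ∈ t, g k := by
    intro s t h
    rw [Submodule.map_le_iff_le_comap]
    refine iSup₂_le fun k hk => fun a ha => ?_
    rw [Submodule.mem_comap]
    have h1 : F a ∈ g (k - 2) := by
      have := hshift ha
      simpa [F, LieAlgebra.ad_apply] using this
    exact (le_iSup₂_of_le (k - 2) (h k hk) le_rfl : g (k - 2) ≤ _) h1
  have hmapP_le : Submodule.map F (⨆ k ∈ {k : ℤ | 1 ≤ k}, g k) ≤ ⨆ k ∈ {k : ℤ | -1 ≤ k}, g k :=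
    hmapG _ _ (fun k hk => by simp only [Set.mem_setOf_eq] at hk ⊢; omega)
  have hmapQ_le : Submodule.map F (⨆ k ∈ {k : ℤ | k ≤ 0}, g k) ≤ ⨆ k ∈ {k : ℤ | k ≤ -2}, g k :=
    hmapG _ _ (fun k hk => by simp only [Set.mem_setOf_eq] at hk ⊢; omega)
  -- bilinear form machinery
  have hrefl : B.IsRefl := fun a b h => (hsymm b a).trans h
  have hBnd : LinearMap.BilinForm.Nondegenerate B := hrefl.nondegenerate_iff_separatingLeft.mpr hnd
  have hW : LinearMap.BilinForm.orthogonal B (LinearMap.range F) ≤ LinearMap.ker F := by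
    intro c hc
    rw [LinearMap.BilinForm.mem_orthogonal_iff] at hc
    have h0 : ⁅f, c⁆ = 0 := by
      refine hnd _ fun b => ?_
      have e3 : ⁅f, c⁆ = -⁅c, f⁆ := by rw [← lie_skew]
      have h1 : B ⁅f, c⁆ b = -(B c ⁅f, b⁆) := by
        rw [e3, map_neg, LinearMap.neg_apply, hinv c f b]
      have h2 : ⁅f, b⁆ ∈ LinearMap.range F := ⟨b, by simp [F, LieAlgebra.ad_apply]⟩
      rw [h1, hsymm c ⁅f, b⁆, LinearMap.BilinForm.isOrtho_def.mp (hc ⁅f, b⁆ h2), neg_zero]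
    rw [LinearMap.mem_ker]
    simpa [F, LieAlgebra.ad_apply] using h0
  have hantitone : ∀ {N N' : Submodule ℂ L}, N ≤ N' →
      LinearMap.BilinForm.orthogonal B N' ≤ LinearMap.BilinForm.orthogonal B N := by
    intro N N' h m hm
    rw [LinearMap.BilinForm.mem_orthogonal_iff] at hm ⊢
    exact fun n hn => hm n (h hn)
  have hTrange : (⨆ k ∈ {k : ℤ | k ≤ -2}, g k) ≤ LinearMap.range F := by
    have h1 : (⨆ k ∈ {k : ℤ | k ≤ -2}, g k) ≤ LinearMap.BilinForm.orthogonal B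
        (⨆ k ∈ {k : ℤ | k ≤ 0}, g k) := by
      intro m hm
      rw [LinearMap.BilinForm.mem_orthogonal_iff]
      intro n hn
      exact horth _ _ (by intro i hi j hj; simp only [Set.mem_setOf_eq] at hi hj; omega) n hn m hm
    have h2 : LinearMap.BilinForm.orthogonal B (⨆ k ∈ {k : ℤ | k ≤ 0}, g k) ≤
        LinearMap.BilinForm.orthogonal B (LinearMap.BilinForm.orthogonal B (LinearMap.range F)) :=
      hantitone (le_trans hW hker_leQ)
    rw [LinearMap.BilinForm.orthogonal_orthogonal hBnd hrefl] at h2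
    exact le_trans h1 h2
  -- positive + nonpositive parts fill L
  have huniv : {k : ℤ | 1 ≤ k} ∪ {k : ℤ | k ≤ 0} = Set.univ := by
    ext k; simp only [Set.mem_union, Set.mem_setOf_eq, Set.mem_univ, iff_true]; omega
  have hPQtop : (⨆ k ∈ {k : ℤ | 1 ≤ k}, g k) ⊔ (⨆ k ∈ {k : ℤ | k ≤ 0}, g k) = ⊤ := by
    rw [← iSup_union, huniv, iSup_univ, hdiag]
  have hrangeEq : LinearMap.range F =
      Submodule.map F (⨆ k ∈ {k : ℤ | 1 ≤ k}, g k) ⊔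
        Submodule.map F (⨆ k ∈ {k : ℤ | k ≤ 0}, g k) := by
    rw [← Submodule.map_sup, hPQtop, Submodule.map_top]
  -- image of the nonpositive part is exactly the part ≤ -2
  have hmapQ : Submodule.map F (⨆ k ∈ {k : ℤ | k ≤ 0}, g k) = ⨆ k ∈ {k : ℤ | k ≤ -2}, g k := by
    refine le_antisymm hmapQ_le ?_
    intro t ht
    have htr : t ∈ Submodule.map F (⨆ k ∈ {k : ℤ | 1 ≤ k}, g k) ⊔
        Submodule.map F (⨆ k ∈ {k : ℤ | k ≤ 0}, g k) := by
      rw [← hrangeEq]; exact hTrange ht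
    obtain ⟨p, hp, q, hq, hpq⟩ := Submodule.mem_sup.mp htr
    have hqT : q ∈ ⨆ k ∈ {k : ℤ | k ≤ -2}, g k := hmapQ_le hq
    have hpT : p ∈ ⨆ k ∈ {k : ℤ | k ≤ -2}, g k := by
      have hpt : p = t - q := by rw [← hpq]; abel
      rw [hpt]
      exact Submodule.sub_mem _ ht hqT
    have hpM : p ∈ ⨆ k ∈ {k : ℤ | -1 ≤ k}, g k := hmapP_le hp
    have hp0 : p = 0 := Submodule.disjoint_def.mp (hdisjG hdTM) p hpT hpM
    rw [hp0, zero_add] at hpq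
    rw [← hpq]
    exact hq
  -- the map is injective on the positive part
  have hmapP_rank : finrank ℂ (Submodule.map F (⨆ k ∈ {k : ℤ | 1 ≤ k}, g k)) =
      finrank ℂ ↥(⨆ k ∈ {k : ℤ | 1 ≤ k}, g k) := by
    have hker0 : LinearMap.ker (F ∘ₗ (⨆ k ∈ {k : ℤ | 1 ≤ k}, g k).subtype) = ⊥ := by
      rw [LinearMap.ker_comp, Submodule.eq_bot_iff]
      intro a ha
      rw [Submodule.mem_comap] at ha
      have h0 : (a : L) = 0 :=
        Submodule.disjoint_def.mp (hdisjG hdPQ) a a.2 (hker_leQ ha)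
      exact Subtype.ext h0
    have hrn := LinearMap.finrank_range_add_finrank_ker
      (F ∘ₗ (⨆ k ∈ {k : ℤ | 1 ≤ k}, g k).subtype)
    rw [hker0, finrank_bot, add_zero, LinearMap.range_comp, Submodule.range_subtype] at hrn
    exact hrn
  -- rank of F
  have hrange_rank : finrank ℂ (LinearMap.range F) =
      finrank ℂ ↥(⨆ k ∈ {k : ℤ | 1 ≤ k}, g k) + finrank ℂ ↥(⨆ k ∈ {k : ℤ | k ≤ -2}, g k) := by
    rw [hrangeEq]
    have hdisj_maps : Disjoint (Submodule.map F (⨆ k ∈ {k : ℤ | 1 ≤ k}, g k))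
        (Submodule.map F (⨆ k ∈ {k : ℤ | k ≤ 0}, g k)) := by
      refine Disjoint.mono hmapP_le ?_ (hdisjG hdTM).symm
      rw [hmapQ]
    rw [hranksup _ _ hdisj_maps, hmapP_rank, hmapQ]
  -- dimension bookkeeping
  have hEtop : finrank ℂ L =
      finrank ℂ ↥(⨆ k ∈ {k : ℤ | 1 ≤ k}, g k) + finrank ℂ ↥(⨆ k ∈ {k : ℤ | k ≤ 0}, g k) := by
    have h1 := hrank hdPQ
    rw [huniv, iSup_univ, hdiag, finrank_top] at h1
    exact h1
  have hsing0 : (⨆ k ∈ ({0} : Set ℤ), g k) = g 0 := by simp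
  have hsingm1 : (⨆ k ∈ ({-1} : Set ℤ), g k) = g (-1) := by simp
  have hu2 : ({0} : Set ℤ) ∪ {k : ℤ | k ≤ -1} = {k : ℤ | k ≤ 0} := by
    ext k; simp only [Set.mem_union, Set.mem_singleton_iff, Set.mem_setOf_eq]; omega
  have hu3 : ({-1} : Set ℤ) ∪ {k : ℤ | k ≤ -2} = {k : ℤ | k ≤ -1} := by
    ext k; simp only [Set.mem_union, Set.mem_singleton_iff, Set.mem_setOf_eq]; omega
  have hEQ : finrank ℂ ↥(⨆ k ∈ {k : ℤ | k ≤ 0}, g k) =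
      finrank ℂ (g 0) + finrank ℂ ↥(⨆ k ∈ {k : ℤ | k ≤ -1}, g k) := by
    have h1 := hrank hd0m1
    rw [hu2, hsing0] at h1
    exact h1
  have hEQ2 : finrank ℂ ↥(⨆ k ∈ {k : ℤ | k ≤ -1}, g k) =
      finrank ℂ (g (-1)) + finrank ℂ ↥(⨆ k ∈ {k : ℤ | k ≤ -2}, g k) := by
    have h1 := hrank hdm1m2
    rw [hu3, hsingm1] at h1
    exact h1
  have hrn := LinearMap.finrank_range_add_finrank_ker F
  rw [← hdual]
  omega
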